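/- Let Λ be a finite type of glue labels, g : Λ → ℕ a strength function, and τ ∈ ℕ with τ ≥ 1. Let n be the number of distinct values v such that v = g(σ) for some σ ∈ Λ, 0 < v, and 2v < τ (i.e., the number of distinct positive strengths strictly below τ/2). Set τ' = 2n + 2. Then there exists a strength function g' : Λ → ℕ such that: (1) for every σ ∈ Λ, g(σ) ≥ τ if and only if g'(σ) ≥ τ'; and (2) for every pair σ, σ' ∈ Λ, g(σ) + g(σ') ≥ τ if and only if g'(σ) + g'(σ') ≥ τ'. -/

import Mathlib

/-- the key relabeling lemma for 2-cooperative equivalence: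
strengths can be replaced by strengths bounded by `2n + 2`, where `n` is the
number of distinct positive strengths strictly below `τ/2`, preserving which
single glues and which pairs of glues reach the temperature. -/
theorem strength_relabeling_two_cooperative
    (Λ : Type) [Fintype Λ] (g : Λ → ℕ) (τ : ℕ) (hτ : 1 ≤ τ)
    (n : ℕ)
    (hn : n = ((Finset.univ.image g).filter (fun v => 0 < v ∧ 2 * v < τ)).card) :
    ∃ g' : Λ → ℕ,
      (∀ σ : Λ, τ ≤ g σ ↔ 2 * n + 2 ≤ g' σ) ∧
      (∀ σ σ' : Λ, τ ≤ g σ + g σ' ↔ 2 * n + 2 ≤ g' σ + g' σ') := by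
  classical
  set S : Finset ℕ := (Finset.univ.image g).filter (fun v => 0 < v ∧ 2 * v < τ) with hS
  set r : ℕ → ℕ := fun v => (S.filter (fun w => w ≤ v)).card with hr
  set k : ℕ → ℕ := fun v => (S.filter (fun w => τ ≤ v + w)).card with hk
  have hrn : ∀ v, r v ≤ n := fun v => hn ▸ Finset.card_filter_le _ _
  have hkn : ∀ v, k v ≤ n := fun v => hn ▸ Finset.card_filter_le _ _
  have hr0 : r 0 = 0 := by
    rw [hr]
    simp only [Finset.card_eq_zero]
    apply Finset.filter_eq_empty_iff.2
    intro w hw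
    have := (Finset.mem_filter.1 hw).2
    omega
  have hmem : ∀ σ : Λ, 0 < g σ → 2 * g σ < τ → g σ ∈ S := by
    intro σ h1 h2
    exact Finset.mem_filter.2 ⟨Finset.mem_image_of_mem g (Finset.mem_univ σ), h1, h2⟩
  have key : ∀ v w0, w0 ∈ S → (τ ≤ v + w0 ↔ n + 1 ≤ k v + r w0) := by
    intro v w0 hw0
    constructor
    · intro h
      have hunion : S.filter (fun w => τ ≤ v + w) ∪ S.filter (fun w => w ≤ w0) = S := by
        apply Finset.Subset.antisymm
        · exact Finset.union_subset (Finset.filter_subset _ _) (Finset.filter_subset _ _)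
        · intro w hw
          rcases le_or_gt w w0 with h1 | h1
          · exact Finset.mem_union_right _ (Finset.mem_filter.2 ⟨hw, h1⟩)
          · exact Finset.mem_union_left _ (Finset.mem_filter.2 ⟨hw, by omega⟩)
      have hinter : w0 ∈ S.filter (fun w => τ ≤ v + w) ∩ S.filter (fun w => w ≤ w0) :=
        Finset.mem_inter.2 ⟨Finset.mem_filter.2 ⟨hw0, h⟩, Finset.mem_filter.2 ⟨hw0, le_refl _⟩⟩
      have hcard := Finset.card_union_add_card_inter
        (S.filter (fun w => τ ≤ v + w)) (S.filter (fun w => w ≤ w0))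
      have h1 : 1 ≤ (S.filter (fun w => τ ≤ v + w) ∩ S.filter (fun w => w ≤ w0)).card :=
        Finset.card_pos.2 ⟨w0, hinter⟩
      rw [hunion] at hcard
      simp only [hk, hr]
      omega
    · intro h
      by_contra hc
      push_neg at hc
      have hdisj : Disjoint (S.filter (fun w => τ ≤ v + w)) (S.filter (fun w => w ≤ w0)) := by
        rw [Finset.disjoint_left]
        intro w hw1 hw2
        have h1 := (Finset.mem_filter.1 hw1).2
        have h2 := (Finset.mem_filter.1 hw2).2
        omega
      have hcard := Finset.card_union_of_disjoint hdisj
      have hsub : (S.filter (fun w => τ ≤ v + w) ∪ S.filter (fun w => w ≤ w0)).card ≤ S.card :=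
        Finset.card_le_card
          (Finset.union_subset (Finset.filter_subset _ _) (Finset.filter_subset _ _))
      simp only [hk, hr] at h
      omega
  refine ⟨fun σ => if τ ≤ g σ then 2 * n + 2
      else if 2 * g σ < τ then r (g σ) else n + 1 + k (g σ), ?_, ?_⟩
  · intro σ
    by_cases h1 : τ ≤ g σ
    · simp [h1]
    · have ha := hrn (g σ); have hb := hkn (g σ)
      simp only [h1, if_false]
      constructor
      · intro h; exact h.elim
      · intro h; split_ifs at h <;> omega
  · intro σ σ'
    -- case analysis on branches for σ and σ'
    by_cases h1 : τ ≤ g σ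
    · simp only [h1, if_true]
      constructor
      · intro _; omega
      · intro _; omega
    by_cases h1' : τ ≤ g σ'
    · simp only [h1', if_true]
      constructor
      · intro _; omega
      · intro _; omega
    simp only [h1, h1', if_false]
    push_neg at h1 h1'
    by_cases h2 : 2 * g σ < τ <;> by_cases h2' : 2 * g σ' < τ <;>
        simp only [h2, h2', if_true, if_false]
    · -- both small
      have ha := hrn (g σ); have hb := hrn (g σ')
      constructor
      · intro h; omega
      · intro h; omega
    · -- σ small, σ' medium
      by_cases h0 : g σ = 0
      · rw [h0, hr0]
        have := hkn (g σ')
        constructor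
        · intro h; omega
        · intro h; omega
      · have hmemσ := hmem σ (by omega) h2
        have hkey := key (g σ') (g σ) hmemσ
        constructor
        · intro h
          have := hkey.1 (by omega); omega
        · intro h
          have := hkey.2 (by omega); omega
    · -- σ medium, σ' small
      by_cases h0 : g σ' = 0
      · rw [h0, hr0]
        have := hkn (g σ)
        constructor
        · intro h; omega
        · intro h; omega
      · have hmemσ := hmem σ' (by omega) h2'
        have hkey := key (g σ) (g σ') hmemσ
        constructor
        · intro h
          have := hkey.1 (by omega); omega
        · intro h
          have := hkey.2 (by omega); omega
    · -- both medium
      constructor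
      · intro _; omega
      · intro _; omega
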